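/- Let Q(x) = (1/√(2π)) ∫_x^∞ e^{−t²/2} dt, let σ > 0, and let π be a probability measure on ℝ with mean μ_θ and variance σ_θ². Then (1/(2πσ²)) ∫ exp(−(θ − μ_θ)²/σ²) / ((1 − Q((θ − μ_θ)/σ))·Q((θ − μ_θ)/σ)) dπ(θ) ≥ (2/(πσ²)) · exp(−σ_θ²/(2σ²)). -/

import Mathlib

open MeasureTheory

namespace ThresholdQuantizerAux

open Real intervalIntegral

noncomputable def Fg (x : ℝ) : ℝ := ∫ t in (0:ℝ)..x, Real.exp (-t^2/2)

noncomputable def Ag (x : ℝ) : ℝ :=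
  ∫ t in (0:ℝ)..(1:ℝ), Real.exp (-x^2*(1+t^2)/2)/(1+t^2)

lemma gauss_eq : (fun t : ℝ => Real.exp (-t^2/2)) = fun t : ℝ => Real.exp (-(1/2) * t^2) := by
  funext t; congr 1; ring

lemma gauss_cont : Continuous (fun t : ℝ => Real.exp (-t^2/2)) := by
  continuity

lemma gauss_integrable : Integrable (fun t : ℝ => Real.exp (-t^2/2)) := by
  rw [gauss_eq]; exact integrable_exp_neg_mul_sq (by norm_num)

lemma gauss_total : ∫ t : ℝ, Real.exp (-t^2/2) = Real.sqrt (2*Real.pi) := by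
  rw [gauss_eq, integral_gaussian]; norm_num [mul_comm]

lemma gauss_Ioi0 : ∫ t in Set.Ioi (0:ℝ), Real.exp (-t^2/2) = Real.sqrt (2*Real.pi) / 2 := by
  rw [gauss_eq, integral_gaussian_Ioi]; norm_num [mul_comm]

lemma Fg_hasDeriv (x : ℝ) : HasDerivAt Fg (Real.exp (-x^2/2)) x := by
  exact intervalIntegral.integral_hasDerivAt_right
    (gauss_integrable.intervalIntegrable)
    (gauss_cont.stronglyMeasurableAtFilter _ _)
    gauss_cont.continuousAt

lemma Fg_cont : Continuous Fg :=
  continuous_iff_continuousAt.2 fun x => (Fg_hasDeriv x).continuousAt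

lemma Fg_sub (x : ℝ) : x * ∫ t in (0:ℝ)..(1:ℝ), Real.exp (-(x*t)^2/2) = Fg x := by
  have h := intervalIntegral.smul_integral_comp_mul_left
    (f := fun t : ℝ => Real.exp (-t^2/2)) (a := (0:ℝ)) (b := (1:ℝ)) x
  simpa [Fg, smul_eq_mul] using h

lemma one_add_sq_pos (t : ℝ) : (0:ℝ) < 1 + t^2 := by positivity

lemma inner_hasDeriv (t x : ℝ) :
    HasDerivAt (fun u : ℝ => Real.exp (-u^2*(1+t^2)/2)/(1+t^2))
      (-x * Real.exp (-x^2*(1+t^2)/2)) x := by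
  have h1 : HasDerivAt (fun u : ℝ => -u^2*(1+t^2)/2) (-x*(1+t^2)) x := by
    have := ((hasDerivAt_id x).pow 2).const_mul (-(1+t^2)/2)
    refine (this.congr_deriv (by simp only [id_eq]; ring)).congr_of_eventuallyEq
      (Filter.Eventually.of_forall fun u => by simp only [Pi.pow_apply, id_eq]; ring)
  have h2 : HasDerivAt (fun u : ℝ => Real.exp (-u^2*(1+t^2)/2))
      (Real.exp (-x^2*(1+t^2)/2) * (-x*(1+t^2))) x := h1.exp
  have h3 := h2.div_const (1+t^2)
  refine h3.congr_deriv ?_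
  rw [div_eq_iff (one_add_sq_pos t).ne']
  ring

lemma cont1 (y : ℝ) : Continuous (fun t : ℝ => Real.exp (-y^2*(1+t^2)/2)/(1+t^2)) :=
  (Real.continuous_exp.comp (by continuity)).div (by continuity)
    (fun t => (one_add_sq_pos t).ne')

lemma Ag_hasDeriv (x : ℝ) :
    HasDerivAt Ag (∫ t in (0:ℝ)..(1:ℝ), -x * Real.exp (-x^2*(1+t^2)/2)) x := by
  have contF' : Continuous (fun t : ℝ => -x * Real.exp (-x^2*(1+t^2)/2)) := by
    exact continuous_const.mul (Real.continuous_exp.comp (by continuity))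
  have h := hasDerivAt_integral_of_dominated_loc_of_deriv_le
    (F := fun (y : ℝ) (t : ℝ) => Real.exp (-y^2*(1+t^2)/2)/(1+t^2))
    (F' := fun (y : ℝ) (t : ℝ) => -y * Real.exp (-y^2*(1+t^2)/2))
    (x₀ := x) (a := (0:ℝ)) (b := (1:ℝ)) (μ := volume)
    (bound := fun _ => |x| + 1)
    (s := Metric.ball x 1) (Metric.ball_mem_nhds x (by norm_num : (0:ℝ) < 1))
    (Filter.Eventually.of_forall fun y => ((cont1 y).aestronglyMeasurable).restrict)
    ((cont1 x).intervalIntegrable 0 1)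
    (contF'.aestronglyMeasurable).restrict
    (Filter.Eventually.of_forall fun t _ => fun y hy => by
      have hexp : Real.exp (-y^2*(1+t^2)/2) ≤ 1 := by
        apply Real.exp_le_one_iff.2
        nlinarith [sq_nonneg y, sq_nonneg t]
      have hy' : |y| ≤ |x| + 1 := by
        have h1 := Metric.mem_ball.1 hy
        rw [Real.dist_eq] at h1
        have h2 := abs_sub_abs_le_abs_sub y x
        linarith
      calc ‖-y * Real.exp (-y^2*(1+t^2)/2)‖ = |y| * Real.exp (-y^2*(1+t^2)/2) := by
            rw [norm_mul, Real.norm_eq_abs, Real.norm_eq_abs, abs_neg,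
              abs_of_pos (Real.exp_pos _)]
      _ ≤ (|x| + 1) * 1 := by
            apply mul_le_mul hy' hexp (Real.exp_pos _).le (by positivity)
      _ = |x| + 1 := by ring)
    (intervalIntegrable_const)
    (Filter.Eventually.of_forall fun t _ => fun y _ => inner_hasDeriv t y)
  exact h.2

lemma Ag_deriv_eq (x : ℝ) :
    (∫ t in (0:ℝ)..(1:ℝ), -x * Real.exp (-x^2*(1+t^2)/2))
      = -(Real.exp (-x^2/2) * Fg x) := by
  have h1 : ∀ t : ℝ, -x * Real.exp (-x^2*(1+t^2)/2)
      = (-Real.exp (-x^2/2)) * (x * Real.exp (-(x*t)^2/2)) := by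
    intro t
    rw [show -x^2*(1+t^2)/2 = -x^2/2 + -(x*t)^2/2 by ring, Real.exp_add]
    ring
  simp only [h1]
  rw [intervalIntegral.integral_const_mul, intervalIntegral.integral_const_mul]
  linear_combination (-Real.exp (-x^2/2)) * Fg_sub x

lemma key_identity (x : ℝ) : Fg x^2 + 2*Ag x = Real.pi/2 := by
  have hd : ∀ y : ℝ, HasDerivAt (fun z => Fg z^2 + 2*Ag z) 0 y := by
    intro y
    have h1 := ((Fg_hasDeriv y).pow 2).add ((Ag_hasDeriv y).const_mul 2)
    rw [Ag_deriv_eq y] at h1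
    refine h1.congr_deriv ?_
    ring
  have hconst := is_const_of_deriv_eq_zero (𝕜 := ℝ)
    (f := fun z => Fg z^2 + 2*Ag z)
    (fun y => (hd y).differentiableAt) (fun y => (hd y).deriv) x 0
  rw [hconst]
  have hF0 : Fg 0 = 0 := intervalIntegral.integral_same
  have hA0 : Ag 0 = Real.pi/4 := by
    unfold Ag
    have : ∀ t : ℝ, Real.exp (-(0:ℝ)^2*(1+t^2)/2)/(1+t^2) = 1/(1+t^2) := by
      intro t; norm_num
    simp only [this]
    rw [integral_one_div_one_add_sq, Real.arctan_one, Real.arctan_zero]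
    ring
  rw [hF0, hA0]; ring

lemma Ag_le (x : ℝ) : Ag x ≤ Real.pi/4 * Real.exp (-x^2/2) := by
  have c2 : Continuous (fun t : ℝ => Real.exp (-x^2/2) * (1/(1+t^2))) :=
    continuous_const.mul (continuous_const.div (by continuity) fun t => (one_add_sq_pos t).ne')
  have h : Ag x ≤ ∫ t in (0:ℝ)..(1:ℝ), Real.exp (-x^2/2) * (1/(1+t^2)) := by
    unfold Ag
    apply intervalIntegral.integral_mono_on (by norm_num)
      ((cont1 x).intervalIntegrable 0 1)
      (c2.intervalIntegrable 0 1)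
    intro t ht
    rw [mul_one_div, div_le_div_iff_of_pos_right (one_add_sq_pos t)]
    apply Real.exp_le_exp.2
    nlinarith [sq_nonneg x, sq_nonneg t, sq_nonneg (x*t)]
  calc Ag x ≤ _ := h
  _ = Real.pi/4 * Real.exp (-x^2/2) := by
      rw [intervalIntegral.integral_const_mul, integral_one_div_one_add_sq,
        Real.arctan_one, Real.arctan_zero]
      ring

lemma le_Ag (x : ℝ) : Real.pi/4 * Real.exp (-x^2) ≤ Ag x := by
  have c2 : Continuous (fun t : ℝ => Real.exp (-x^2) * (1/(1+t^2))) :=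
    continuous_const.mul (continuous_const.div (by continuity) fun t => (one_add_sq_pos t).ne')
  have h : (∫ t in (0:ℝ)..(1:ℝ), Real.exp (-x^2) * (1/(1+t^2))) ≤ Ag x := by
    unfold Ag
    apply intervalIntegral.integral_mono_on (by norm_num)
      (c2.intervalIntegrable 0 1)
      ((cont1 x).intervalIntegrable 0 1)
    intro t ht
    rw [mul_one_div, div_le_div_iff_of_pos_right (one_add_sq_pos t)]
    apply Real.exp_le_exp.2
    rcases ht with ⟨ht0, ht1⟩
    nlinarith [sq_nonneg x, mul_nonneg (sq_nonneg x)
      (mul_nonneg (sub_nonneg.2 ht1) (by linarith : (0:ℝ) ≤ 1 + t))]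
  calc Real.pi/4 * Real.exp (-x^2)
      = ∫ t in (0:ℝ)..(1:ℝ), Real.exp (-x^2) * (1/(1+t^2)) := by
        rw [intervalIntegral.integral_const_mul, integral_one_div_one_add_sq,
          Real.arctan_one, Real.arctan_zero]
        ring
  _ ≤ Ag x := h

lemma sqrt_two_pi_pos : (0:ℝ) < Real.sqrt (2*Real.pi) :=
  Real.sqrt_pos.2 (by positivity)

lemma gauss_Iic0 : ∫ t in Set.Iic (0:ℝ), Real.exp (-t^2/2) = Real.sqrt (2*Real.pi) / 2 := by
  have h := MeasureTheory.integral_add_compl (measurableSet_Iic (a := (0:ℝ)))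
    gauss_integrable
  rw [Set.compl_Iic, gauss_Ioi0, gauss_total] at h
  linarith

lemma gauss_Iic (x : ℝ) :
    ∫ t in Set.Iic x, Real.exp (-t^2/2) = Real.sqrt (2*Real.pi) / 2 + Fg x := by
  have h := intervalIntegral.integral_Iic_sub_Iic
    (gauss_integrable.integrableOn (s := Set.Iic 0))
    (gauss_integrable.integrableOn (s := Set.Iic x))
  rw [gauss_Iic0] at h
  unfold Fg
  linarith

lemma gauss_Ioi (x : ℝ) :
    ∫ t in Set.Ioi x, Real.exp (-t^2/2) = Real.sqrt (2*Real.pi) / 2 - Fg x := by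
  have h := MeasureTheory.integral_add_compl (measurableSet_Iic (a := x))
    gauss_integrable
  rw [Set.compl_Iic, gauss_Iic, gauss_total] at h
  linarith

end ThresholdQuantizerAux

open ThresholdQuantizerAux

/-- For the Gaussian tail function `Q`, `σ > 0`, and a prior `π` with
mean `μθ` and variance `σθ²`, the posterior Fisher information of the binary
threshold quantizer with threshold `μθ`,
`(1/(2πσ²)) ∫ e^{−(θ−μθ)²/σ²}/((1−Q((θ−μθ)/σ)) Q((θ−μθ)/σ)) dπ(θ)`, is at least
`(2/(πσ²)) e^{−σθ²/(2σ²)}`. -/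
theorem threshold_quantizer_fisher_information_lower_bound
    (σ μθ σθ : ℝ) (hσ : 0 < σ)
    (Q : ℝ → ℝ)
    (hQ : ∀ x, Q x = (1 / Real.sqrt (2 * Real.pi)) * ∫ t in Set.Ioi x, Real.exp (-t ^ 2 / 2))
    (π : Measure ℝ) [IsProbabilityMeasure π]
    (hmean_int : Integrable (fun θ : ℝ => θ) π)
    (hmean : ∫ θ, θ ∂π = μθ)
    (hvar_int : Integrable (fun θ : ℝ => (θ - μθ) ^ 2) π)
    (hvar : ∫ θ, (θ - μθ) ^ 2 ∂π = σθ ^ 2) :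
    (1 / (2 * Real.pi * σ ^ 2)) *
        (∫ θ, Real.exp (-(θ - μθ) ^ 2 / σ ^ 2)
          / ((1 - Q ((θ - μθ) / σ)) * Q ((θ - μθ) / σ)) ∂π)
      ≥ (2 / (Real.pi * σ ^ 2)) * Real.exp (-σθ ^ 2 / (2 * σ ^ 2)) := by
  have hπpos := Real.pi_pos
  have hs := sqrt_two_pi_pos
  have hs2 : Real.sqrt (2*Real.pi)^2 = 2*Real.pi := Real.sq_sqrt (by positivity)
  -- Q in terms of Fg
  have hQeq : ∀ x, Q x = 1/2 - Fg x / Real.sqrt (2*Real.pi) := by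
    intro x
    rw [hQ x]
    have : ∀ t : ℝ, Real.exp (-t ^ 2 / 2) = Real.exp (-t^2/2) := fun t => rfl
    rw [show (∫ t in Set.Ioi x, Real.exp (-t ^ 2 / 2)) =
        ∫ t in Set.Ioi x, Real.exp (-t^2/2) from rfl, gauss_Ioi, mul_sub]
    congr 1
    · rw [one_div, inv_mul_eq_div, div_right_comm, div_self hs.ne']
    · rw [one_div, inv_mul_eq_div]
  -- product formula
  have hprod : ∀ x, (1 - Q x) * Q x = Ag x / Real.pi := by
    intro x
    rw [hQeq x]
    have hF : Fg x^2 = Real.pi/2 - 2*Ag x := by linarith [key_identity x]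
    have e0 : (1 - (1/2 - Fg x / Real.sqrt (2*Real.pi))) * (1/2 - Fg x / Real.sqrt (2*Real.pi))
        = 1/4 - (Fg x / Real.sqrt (2*Real.pi))^2 := by ring
    have e1 : (Fg x / Real.sqrt (2*Real.pi))^2 = Fg x^2 / (2*Real.pi) := by
      rw [div_pow, hs2]
    rw [e0, e1, hF, div_sub_div _ _ (by positivity : (4:ℝ) ≠ 0) (by positivity : 2*Real.pi ≠ 0),
      div_eq_div_iff (by positivity) hπpos.ne']
    ring
  have hprod_pos : ∀ x, 0 < (1 - Q x) * Q x := by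
    intro x
    rw [hprod x]
    have := le_Ag x
    have : (0:ℝ) < Ag x := lt_of_lt_of_le (by positivity) this
    positivity
  have hprod_le : ∀ x, (1 - Q x) * Q x ≤ Real.exp (-x^2/2) / 4 := by
    intro x
    rw [hprod x, div_le_div_iff₀ hπpos (by norm_num : (0:ℝ) < 4)]
    nlinarith [Ag_le x]
  have hprod_ge : ∀ x, Real.exp (-x^2) / 4 ≤ (1 - Q x) * Q x := by
    intro x
    rw [hprod x, div_le_div_iff₀ (by norm_num : (0:ℝ) < 4) hπpos]
    nlinarith [le_Ag x]
  -- pointwise bounds on the integrand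
  have low : ∀ x : ℝ, 4 * Real.exp (-x^2/2) ≤ Real.exp (-x^2) / ((1 - Q x) * Q x) := by
    intro x
    rw [le_div_iff₀ (hprod_pos x)]
    have h1 := hprod_le x
    have h2 : Real.exp (-x^2/2) * Real.exp (-x^2/2) = Real.exp (-x^2) := by
      rw [← Real.exp_add]; congr 1; ring
    nlinarith [Real.exp_pos (-x^2/2)]
  have up : ∀ x : ℝ, Real.exp (-x^2) / ((1 - Q x) * Q x) ≤ 4 := by
    intro x
    rw [div_le_iff₀ (hprod_pos x)]
    nlinarith [hprod_ge x]
  -- the integrand as a function of θ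
  set f : ℝ → ℝ := fun θ => Real.exp (-(θ - μθ)^2/σ^2)
      / ((1 - Q ((θ - μθ)/σ)) * Q ((θ - μθ)/σ)) with hf_def
  have hexp1 : ∀ θ : ℝ, -(θ - μθ)^2/σ^2 = -(((θ - μθ)/σ)^2) := by
    intro θ; rw [div_pow]; ring
  have hexp2 : ∀ θ : ℝ, -(θ - μθ)^2/(2*σ^2) = -(((θ - μθ)/σ)^2)/2 := by
    intro θ; rw [div_pow]; ring
  have hfg : ∀ θ : ℝ, 4 * Real.exp (-(θ - μθ)^2/(2*σ^2)) ≤ f θ := by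
    intro θ
    have := low ((θ - μθ)/σ)
    rw [hf_def]
    simp only []
    rw [hexp1 θ, hexp2 θ]
    exact this
  have hf4 : ∀ θ : ℝ, f θ ≤ 4 := by
    intro θ
    have := up ((θ - μθ)/σ)
    rw [hf_def]
    simp only []
    rw [hexp1 θ]
    exact this
  have hf0 : ∀ θ : ℝ, 0 ≤ f θ := fun θ => le_trans (by positivity) (hfg θ)
  -- continuity and integrability
  have hQc : Continuous Q := by
    have : Q = fun x => 1/2 - Fg x / Real.sqrt (2*Real.pi) := funext hQeq
    rw [this]
    exact continuous_const.sub (Fg_cont.div_const _)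
  have hlin : Continuous (fun θ : ℝ => (θ - μθ)/σ) :=
    (continuous_id.sub continuous_const).div_const σ
  have hfc : Continuous f := by
    apply Continuous.div
    · exact Real.continuous_exp.comp
        (((continuous_id.sub continuous_const).pow 2).neg.div_const _)
    · exact (continuous_const.sub (hQc.comp hlin)).mul (hQc.comp hlin)
    · intro θ; exact (hprod_pos ((θ - μθ)/σ)).ne'
  have hf_int : Integrable f π := by
    apply (integrable_const (4:ℝ)).mono' hfc.aestronglyMeasurable
    exact Filter.Eventually.of_forall fun θ => by
      rw [Real.norm_eq_abs, abs_of_nonneg (hf0 θ)]; exact hf4 θ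
  set g : ℝ → ℝ := fun θ => 4 * Real.exp (-(θ - μθ)^2/(2*σ^2)) with hg_def
  have hg_exp_le : ∀ θ : ℝ, Real.exp (-(θ - μθ)^2/(2*σ^2)) ≤ 1 := by
    intro θ
    apply Real.exp_le_one_iff.2
    apply div_nonpos_of_nonpos_of_nonneg (neg_nonpos.2 (sq_nonneg _)) (by positivity)
  have hgc : Continuous fun θ : ℝ => 4 * Real.exp (-(θ - μθ)^2/(2*σ^2)) := by
    apply continuous_const.mul
    exact Real.continuous_exp.comp
      (((continuous_id.sub continuous_const).pow 2).neg.div_const _)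
  have hg_int : Integrable g π := by
    apply (integrable_const (4:ℝ)).mono' hgc.aestronglyMeasurable
    exact Filter.Eventually.of_forall fun θ => by
      rw [Real.norm_eq_abs, abs_of_nonneg (by positivity)]
      nlinarith [hg_exp_le θ, Real.exp_pos (-(θ - μθ)^2/(2*σ^2))]
  have step1 : ∫ θ, g θ ∂π ≤ ∫ θ, f θ ∂π := integral_mono hg_int hf_int hfg
  -- Jensen
  set h : ℝ → ℝ := fun θ => -(θ - μθ)^2/(2*σ^2) with hh_def
  have hh_eq : h = fun θ => (θ - μθ)^2 * (-(1/(2*σ^2))) := by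
    funext θ; rw [hh_def]; ring
  have hh_int : Integrable h π := by
    rw [hh_eq]; exact hvar_int.mul_const _
  have hexpc : Continuous fun θ : ℝ => Real.exp (-(θ - μθ)^2/(2*σ^2)) := by
    apply Continuous.comp Real.continuous_exp
    exact ((continuous_id.sub continuous_const).pow 2).neg.div_const _
  have hexph_int : Integrable (fun θ => Real.exp (h θ)) π := by
    apply (integrable_const (1:ℝ)).mono' hexpc.aestronglyMeasurable
    exact Filter.Eventually.of_forall fun θ => by
      rw [Real.norm_eq_abs, abs_of_nonneg (Real.exp_pos _).le]
      exact hg_exp_le θ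
  have jensen : Real.exp (∫ θ, h θ ∂π) ≤ ∫ θ, Real.exp (h θ) ∂π := by
    have := convexOn_exp.map_average_le Real.continuous_exp.continuousOn
      isClosed_univ (Filter.Eventually.of_forall fun θ => Set.mem_univ (h θ))
      hh_int hexph_int
    simpa [average_eq_integral] using this
  have hinth : ∫ θ, h θ ∂π = -σθ^2/(2*σ^2) := by
    rw [hh_eq, integral_mul_const, hvar]
    ring
  have step2 : 4 * Real.exp (-σθ^2/(2*σ^2)) ≤ ∫ θ, g θ ∂π := by
    rw [hg_def]
    rw [show (∫ θ, 4 * Real.exp (-(θ - μθ)^2/(2*σ^2)) ∂π)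
        = 4 * ∫ θ, Real.exp (h θ) ∂π by rw [integral_const_mul]]
    have := jensen
    rw [hinth] at this
    linarith
  -- assemble
  rw [ge_iff_le]
  have hmain : 4 * Real.exp (-σθ^2/(2*σ^2)) ≤ ∫ θ, f θ ∂π := le_trans step2 step1
  have hgoal_int : (∫ θ, Real.exp (-(θ - μθ) ^ 2 / σ ^ 2)
      / ((1 - Q ((θ - μθ) / σ)) * Q ((θ - μθ) / σ)) ∂π) = ∫ θ, f θ ∂π := rfl
  rw [hgoal_int]
  have hc : (0:ℝ) < 1 / (2 * Real.pi * σ ^ 2) := by positivity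
  calc (2 / (Real.pi * σ ^ 2)) * Real.exp (-σθ ^ 2 / (2 * σ ^ 2))
      = (1 / (2 * Real.pi * σ ^ 2)) * (4 * Real.exp (-σθ^2/(2*σ^2))) := by
        field_simp
        ring
  _ ≤ (1 / (2 * Real.pi * σ ^ 2)) * ∫ θ, f θ ∂π := by
        apply mul_le_mul_of_nonneg_left hmain hc.le
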